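/- Let n ≥ k ≥ 1. Suppose A, B ∈ ℂ^{n×n} are Hermitian, B is positive definite, with joint eigen-decomposition Uᴴ A U = diag(λ₁,…,λₙ), Uᴴ B U = Iₙ where U is invertible and λ₁ ≤ … ≤ λₙ, and suppose D ∈ ℂ^{k×k} is Hermitian with unitary eigen-decomposition Qᴴ D Q = diag(ω₁,…,ω_k), ω₁ ≥ … ≥ ω_k, and ω_i ≥ 0 for i ≤ ℓ, ω_i ≤ 0 for i > ℓ. Then for every X ∈ ℂ^{n×k} with Xᴴ B X = I_k the trace of D Xᴴ A X is a real number, and the real number Σ_{i=1}^{ℓ} ω_i λ_i + Σ_{i=ℓ+1}^{k} ω_i λ_{i+n−k} is the minimum (i.e., it is a lower bound and it is attained) of the set { t ∈ ℝ : ∃ X ∈ ℂ^{n×k}, Xᴴ B X = I_k and trace(D Xᴴ A X) = t }. -/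

import Mathlib

open Matrix BigOperators Finset
open scoped ComplexOrder



lemma filter_range_lt (n m : ℕ) (hm : m ≤ n) :
    (range n).filter (· < m) = range m := by
  ext j; simp only [mem_filter, mem_range]; omega

lemma sum_indicator_lt (n m : ℕ) (hm : m ≤ n) (f : ℕ → ℝ) :
    ∑ j ∈ range n, (if j < m then f j else 0) = ∑ j ∈ range m, f j := by
  rw [← Finset.sum_filter, filter_range_lt n m hm]

/-- min form: weights in [0,1] summing to m, lam nondecreasing on range n. -/
lemma rlemma_min (n m : ℕ) (hm : m ≤ n) (lam : ℕ → ℝ)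
    (hlam : ∀ i j, i ≤ j → j < n → lam i ≤ lam j) (r : ℕ → ℝ)
    (h0 : ∀ j < n, 0 ≤ r j) (h1 : ∀ j < n, r j ≤ 1)
    (hsum : ∑ j ∈ range n, r j = m) :
    ∑ j ∈ range m, lam j ≤ ∑ j ∈ range n, lam j * r j := by
  rcases eq_or_lt_of_le hm with h | h
  · have hall : ∀ j ∈ range n, r j = 1 := by
      intro j hj
      have h2 : ∑ j ∈ range n, (1 - r j) = 0 := by
        rw [Finset.sum_sub_distrib, hsum]; simp [h]
      have h3 : ∀ j ∈ range n, (0:ℝ) ≤ 1 - r j := by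
        intro j hj; have := h1 j (mem_range.mp hj); linarith
      have := (Finset.sum_eq_zero_iff_of_nonneg h3).mp h2 j hj
      linarith
    subst h
    refine le_of_eq (Finset.sum_congr rfl ?_)
    intro j hj; rw [hall j hj, mul_one]
  · set e : ℕ → ℝ := fun j => if j < m then 1 else 0 with he
    have hsume : ∑ j ∈ range n, e j = m := by
      rw [he]; simp only []
      rw [sum_indicator_lt n m hm (fun _ => (1:ℝ))]; simp
    have hsumle : ∑ j ∈ range n, lam j * e j = ∑ j ∈ range m, lam j := by
      have : ∀ j, lam j * e j = if j < m then lam j else 0 := by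
        intro j; rw [he]; by_cases hj : j < m <;> simp [hj]
      rw [Finset.sum_congr rfl (fun j _ => this j), sum_indicator_lt n m hm]
    have key : ∀ j ∈ range n, 0 ≤ (lam j - lam m) * (r j - e j) := by
      intro j hj
      have hjn := mem_range.mp hj
      by_cases hjm : j < m
      · have h4 := hlam j m (le_of_lt hjm) h
        have h5 := h1 j hjn
        rw [he]; simp only [hjm, if_pos]
        nlinarith
      · push_neg at hjm
        have h4 := hlam m j hjm hjn
        have h5 := h0 j hjn
        rw [he]; simp only [show ¬ (j < m) by omega, if_neg, not_false_iff]
        nlinarith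
    have hsum2 : (0:ℝ) ≤ ∑ j ∈ range n, (lam j - lam m) * (r j - e j) :=
      Finset.sum_nonneg key
    have expand : ∑ j ∈ range n, (lam j - lam m) * (r j - e j)
        = (∑ j ∈ range n, lam j * r j) - (∑ j ∈ range n, lam j * e j)
          - lam m * (∑ j ∈ range n, r j) + lam m * (∑ j ∈ range n, e j) := by
      simp only [Finset.mul_sum, ← Finset.sum_add_distrib, ← Finset.sum_sub_distrib]
      exact Finset.sum_congr rfl (fun j _ => by ring)
    rw [hsum, hsume, hsumle] at expand
    linarith

/-- max form -/
lemma rlemma_max (n m : ℕ) (hm : m ≤ n) (lam : ℕ → ℝ)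
    (hlam : ∀ i j, i ≤ j → j < n → lam i ≤ lam j) (r : ℕ → ℝ)
    (h0 : ∀ j < n, 0 ≤ r j) (h1 : ∀ j < n, r j ≤ 1)
    (hsum : ∑ j ∈ range n, r j = m) :
    ∑ j ∈ range n, lam j * r j ≤ ∑ j ∈ Ico (n - m) n, lam j := by
  rcases Nat.eq_zero_or_pos m with h | h
  · subst h
    have hall : ∀ j ∈ range n, r j = 0 := by
      intro j hj
      have h3 : ∀ j ∈ range n, (0:ℝ) ≤ r j := fun j hj => h0 j (mem_range.mp hj)
      exact (Finset.sum_eq_zero_iff_of_nonneg h3).mp (by rw [hsum]; simp) j hj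
    have : ∑ j ∈ range n, lam j * r j = 0 :=
      Finset.sum_eq_zero (fun j hj => by rw [hall j hj, mul_zero])
    simp [this]
  · set p := n - m with hp
    have hpn : p < n := by omega
    set e : ℕ → ℝ := fun j => if j < p then 0 else 1 with he
    have hsume : ∑ j ∈ range n, e j = m := by
      have : ∀ j, e j = 1 - (if j < p then 1 else 0) := by
        intro j; rw [he]; by_cases hj : j < p <;> simp [hj]
      rw [Finset.sum_congr rfl (fun j _ => this j), Finset.sum_sub_distrib,
        sum_indicator_lt n p (by omega) (fun _ => (1:ℝ))]
      simp only [Finset.sum_const, card_range, nsmul_eq_mul, mul_one]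
      rw [hp, Nat.cast_sub hm]; ring
    have hsumle : ∑ j ∈ range n, lam j * e j = ∑ j ∈ Ico p n, lam j := by
      have h2 : ∀ j, lam j * e j = lam j - (if j < p then lam j else 0) := by
        intro j; rw [he]; by_cases hj : j < p <;> simp [hj]
      rw [Finset.sum_congr rfl (fun j _ => h2 j), Finset.sum_sub_distrib,
        sum_indicator_lt n p (by omega)]
      rw [Finset.sum_Ico_eq_sub _ (le_of_lt hpn)]
    have key : ∀ j ∈ range n, 0 ≤ (lam j - lam p) * (e j - r j) := by
      intro j hj
      have hjn := mem_range.mp hj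
      by_cases hjm : j < p
      · have h4 := hlam j p (le_of_lt hjm) hpn
        have h5 := h0 j hjn
        rw [he]; simp only [hjm, if_pos]
        nlinarith
      · push_neg at hjm
        have h4 := hlam p j hjm hjn
        have h5 := h1 j hjn
        rw [he]; simp only [show ¬ (j < p) by omega, if_neg, not_false_iff]
        nlinarith
    have hsum2 : (0:ℝ) ≤ ∑ j ∈ range n, (lam j - lam p) * (e j - r j) :=
      Finset.sum_nonneg key
    have expand : ∑ j ∈ range n, (lam j - lam p) * (e j - r j)
        = (∑ j ∈ range n, lam j * e j) - (∑ j ∈ range n, lam j * r j)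
          - lam p * (∑ j ∈ range n, e j) + lam p * (∑ j ∈ range n, r j) := by
      simp only [Finset.mul_sum, ← Finset.sum_add_distrib, ← Finset.sum_sub_distrib]
      exact Finset.sum_congr rfl (fun j _ => by ring)
    rw [hsum, hsume, hsumle] at expand
    linarith

/-- Abel comparison -/
lemma abel_cmp (m : ℕ) (ω c d : ℕ → ℝ)
    (hω : ∀ i j, i ≤ j → j < m → ω j ≤ ω i)
    (hω0 : ∀ i < m, 0 ≤ ω i)
    (h : ∀ p ≤ m, ∑ i ∈ range p, d i ≤ ∑ i ∈ range p, c i) :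
    ∑ i ∈ range m, ω i * d i ≤ ∑ i ∈ range m, ω i * c i := by
  induction m generalizing ω with
  | zero => simp
  | succ m ih =>
    have ha : 0 ≤ ω m := hω0 m (by omega)
    set ω' : ℕ → ℝ := fun i => ω i - ω m with hω'
    have key : ∀ x : ℕ → ℝ, ∑ i ∈ range (m+1), ω i * x i
        = ∑ i ∈ range m, ω' i * x i + ω m * ∑ i ∈ range (m+1), x i := by
      intro x
      have h9 : ∑ i ∈ range m, ω' i * x i + ω m * ∑ i ∈ range m, x i
          = ∑ i ∈ range m, ω i * x i := by
        rw [Finset.mul_sum, ← Finset.sum_add_distrib]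
        exact Finset.sum_congr rfl (fun i _ => by rw [hω']; ring)
      rw [Finset.sum_range_succ, Finset.sum_range_succ (f := x), mul_add, ← h9]
      ring
    rw [key d, key c]
    have h1 : ∑ i ∈ range m, ω' i * d i ≤ ∑ i ∈ range m, ω' i * c i := by
      apply ih
      · intro i j hij hjm
        have := hω i j hij (by omega); rw [hω']; simp only []; linarith
      · intro i him
        have := hω i m (by omega) (by omega); rw [hω']; simp only []; linarith
      · intro p hp; exact h p (by omega)
    have h2 : ω m * ∑ i ∈ range (m+1), d i ≤ ω m * ∑ i ∈ range (m+1), c i :=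
      mul_le_mul_of_nonneg_left (h (m+1) le_rfl) ha
    linarith

lemma core_ineq (n k ℓ : ℕ) (hkn : k ≤ n) (hℓ : ℓ ≤ k)
    (lam : ℕ → ℝ) (hlam : ∀ i j, i ≤ j → j < n → lam i ≤ lam j)
    (ω : ℕ → ℝ) (hω : ∀ i j, i ≤ j → j < k → ω j ≤ ω i)
    (hpos : ∀ i < ℓ, 0 ≤ ω i) (hneg : ∀ i, ℓ ≤ i → i < k → ω i ≤ 0)
    (s : ℕ → ℕ → ℝ) (hs0 : ∀ j i, 0 ≤ s j i)
    (hcol : ∀ i < k, ∑ j ∈ range n, s j i = 1)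
    (hrow : ∀ j < n, ∑ i ∈ range k, s j i ≤ 1) :
    ∑ i ∈ range ℓ, ω i * lam i + ∑ i ∈ Ico ℓ k, ω i * lam (i + n - k)
      ≤ ∑ i ∈ range k, ω i * (∑ j ∈ range n, lam j * s j i) := by
  set c : ℕ → ℝ := fun i => ∑ j ∈ range n, lam j * s j i with hc
  -- prefix Ky Fan
  have prefixKF : ∀ p ≤ k, ∑ j ∈ range p, lam j ≤ ∑ i ∈ range p, c i := by
    intro p hp
    have hr0 : ∀ j < n, (0:ℝ) ≤ ∑ i ∈ range p, s j i :=
      fun j _ => Finset.sum_nonneg (fun i _ => hs0 j i)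
    have hr1 : ∀ j < n, ∑ i ∈ range p, s j i ≤ 1 := by
      intro j hj
      calc ∑ i ∈ range p, s j i ≤ ∑ i ∈ range k, s j i :=
            Finset.sum_le_sum_of_subset_of_nonneg
              (Finset.range_subset_range.mpr hp) (fun i _ _ => hs0 j i)
        _ ≤ 1 := hrow j hj
    have hrs : ∑ j ∈ range n, (∑ i ∈ range p, s j i) = p := by
      rw [Finset.sum_comm]
      rw [Finset.sum_congr rfl (fun i hi => hcol i (lt_of_lt_of_le (mem_range.mp hi) hp))]
      simp
    have := rlemma_min n p (le_trans hp hkn) lam hlam _ hr0 hr1 hrs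
    refine le_trans this (le_of_eq ?_)
    rw [hc]
    simp only [Finset.mul_sum]
    exact Finset.sum_comm
  -- suffix Ky Fan
  have suffixKF : ∀ p ≤ k, ∑ i ∈ Ico (k - p) k, c i ≤ ∑ j ∈ Ico (n - p) n, lam j := by
    intro p hp
    have hr0 : ∀ j < n, (0:ℝ) ≤ ∑ i ∈ Ico (k - p) k, s j i :=
      fun j _ => Finset.sum_nonneg (fun i _ => hs0 j i)
    have hr1 : ∀ j < n, ∑ i ∈ Ico (k - p) k, s j i ≤ 1 := by
      intro j hj
      calc ∑ i ∈ Ico (k - p) k, s j i ≤ ∑ i ∈ range k, s j i := by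
            rw [Finset.range_eq_Ico]
            exact Finset.sum_le_sum_of_subset_of_nonneg
              (Finset.Ico_subset_Ico (Nat.zero_le _) le_rfl) (fun i _ _ => hs0 j i)
        _ ≤ 1 := hrow j hj
    have hrs : ∑ j ∈ range n, (∑ i ∈ Ico (k - p) k, s j i) = p := by
      rw [Finset.sum_comm]
      rw [Finset.sum_congr rfl (fun i hi => hcol i (Finset.mem_Ico.mp hi).2)]
      simp [Nat.sub_sub_self hp]
    have := rlemma_max n p (le_trans hp hkn) lam hlam _ hr0 hr1 hrs
    refine le_trans (le_of_eq ?_) this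
    rw [hc]
    simp only [Finset.mul_sum]
    exact Finset.sum_comm
  -- part 1
  have part1 : ∑ i ∈ range ℓ, ω i * lam i ≤ ∑ i ∈ range ℓ, ω i * c i := by
    apply abel_cmp ℓ ω c lam
    · intro i j hij hj; exact hω i j hij (by omega)
    · intro i hi; exact hpos i hi
    · intro p hp; exact prefixKF p (le_trans hp hℓ)
  -- part 2, by reflection
  set K := k - ℓ with hK
  have reflIco : ∀ f : ℕ → ℝ, ∑ i ∈ Ico ℓ k, f i = ∑ t ∈ range K, f (k - 1 - t) := by
    intro f
    rw [Finset.sum_Ico_eq_sum_range, ← Finset.sum_range_reflect]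
    refine Finset.sum_congr rfl (fun t ht => ?_)
    have := mem_range.mp ht
    congr 1
    omega
  have reflIco2 : ∀ (f : ℕ → ℝ) (p : ℕ), p ≤ k →
      ∑ i ∈ Ico (k - p) k, f i = ∑ t ∈ range p, f (k - 1 - t) := by
    intro f p hp
    rw [Finset.sum_Ico_eq_sum_range, ← Finset.sum_range_reflect]
    have hcard : k - (k - p) = p := by omega
    rw [hcard]
    refine Finset.sum_congr rfl (fun t ht => ?_)
    have := mem_range.mp ht
    congr 1
    omega
  have reflIco2n : ∀ (f : ℕ → ℝ) (p : ℕ), p ≤ n →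
      ∑ i ∈ Ico (n - p) n, f i = ∑ t ∈ range p, f (n - 1 - t) := by
    intro f p hp
    rw [Finset.sum_Ico_eq_sum_range, ← Finset.sum_range_reflect]
    have hcard : n - (n - p) = p := by omega
    rw [hcard]
    refine Finset.sum_congr rfl (fun t ht => ?_)
    have := mem_range.mp ht
    congr 1
    omega
  have part2 : ∑ i ∈ Ico ℓ k, ω i * lam (i + n - k) ≤ ∑ i ∈ Ico ℓ k, ω i * c i := by
    have habel := abel_cmp K (fun t => -ω (k - 1 - t)) (fun t => lam (n - 1 - t))
        (fun t => c (k - 1 - t)) ?_ ?_ ?_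
    · rw [reflIco (fun i => ω i * lam (i + n - k)), reflIco (fun i => ω i * c i)]
      have e1 : ∑ t ∈ range K, ω (k - 1 - t) * lam (k - 1 - t + n - k)
          = ∑ t ∈ range K, ω (k - 1 - t) * lam (n - 1 - t) := by
        refine Finset.sum_congr rfl (fun t ht => ?_)
        have := mem_range.mp ht
        congr 2
        omega
      rw [e1]
      have e2 : ∀ t, (-ω (k - 1 - t)) * c (k - 1 - t) = -(ω (k - 1 - t) * c (k - 1 - t)) :=
        fun t => by ring
      have e3 : ∀ t, (-ω (k - 1 - t)) * lam (n - 1 - t) = -(ω (k - 1 - t) * lam (n - 1 - t)) :=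
        fun t => by ring
      simp only [e2, e3, Finset.sum_neg_distrib] at habel
      linarith
    · intro i j hij hj
      simp only [neg_le_neg_iff]
      exact hω (k - 1 - j) (k - 1 - i) (by omega) (by omega)
    · intro i hi
      simp only [Left.nonneg_neg_iff]
      exact hneg (k - 1 - i) (by omega) (by omega)
    · intro p hp
      rw [← reflIco2 c p (by omega), ← reflIco2n lam p (by omega)]
      exact suffixKF p (by omega)
  calc ∑ i ∈ range ℓ, ω i * lam i + ∑ i ∈ Ico ℓ k, ω i * lam (i + n - k)
      ≤ ∑ i ∈ range ℓ, ω i * c i + ∑ i ∈ Ico ℓ k, ω i * c i := add_le_add part1 part2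
    _ = ∑ i ∈ range k, ω i * c i := by
        simp only [Finset.range_eq_Ico]
        exact Finset.sum_Ico_consecutive _ (Nat.zero_le ℓ) hℓ

lemma core_ineq_fin (n k ℓ : ℕ) (hk : 1 ≤ k) (hkn : k ≤ n) (hℓ : ℓ ≤ k)
    (lam : Fin n → ℝ) (hlam : Monotone lam)
    (ω : Fin k → ℝ) (hω : Antitone ω)
    (hωpos : ∀ i : Fin k, (i : ℕ) < ℓ → 0 ≤ ω i)
    (hωneg : ∀ i : Fin k, ℓ ≤ (i : ℕ) → ω i ≤ 0)
    (s : Fin n → Fin k → ℝ) (hs0 : ∀ j i, 0 ≤ s j i)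
    (hcol : ∀ i, ∑ j, s j i = 1) (hrow : ∀ j, ∑ i, s j i ≤ 1) :
    (∑ i : Fin k, ω i * (if (i : ℕ) < ℓ then lam (Fin.castLE hkn i)
        else lam ⟨(i : ℕ) + n - k, (by have := i.isLt; exact ⟨by omega, trivial⟩ : (i : ℕ) + n - k < n ∧ True).1⟩))
      ≤ ∑ i : Fin k, ω i * ∑ j : Fin n, lam j * s j i := by
  set lam' : ℕ → ℝ := fun j => if h : j < n then lam ⟨j, h⟩ else 0 with hlam'def
  set ω' : ℕ → ℝ := fun i => if h : i < k then ω ⟨i, h⟩ else 0 with hω'def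
  set s' : ℕ → ℕ → ℝ := fun j i =>
    if h : j < n ∧ i < k then s ⟨j, h.1⟩ ⟨i, h.2⟩ else 0 with hs'def
  have hlam'eq : ∀ j : Fin n, lam' ↑j = lam j := by
    intro j; simp only [hlam'def]; rw [dif_pos j.isLt]
  have hω'eq : ∀ i : Fin k, ω' ↑i = ω i := by
    intro i; simp only [hω'def]; rw [dif_pos i.isLt]
  have hs'eq : ∀ (j : Fin n) (i : Fin k), s' ↑j ↑i = s j i := by
    intro j i; simp only [hs'def]; rw [dif_pos ⟨j.isLt, i.isLt⟩]
  have key := core_ineq n k ℓ hkn hℓ lam' ?_ ω' ?_ ?_ ?_ s' ?_ ?_ ?_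
  · -- bridge RHS
    have hR : ∑ i ∈ range k, ω' i * (∑ j ∈ range n, lam' j * s' j i)
        = ∑ i : Fin k, ω i * ∑ j : Fin n, lam j * s j i := by
      rw [← Fin.sum_univ_eq_sum_range (fun i => ω' i * ∑ j ∈ range n, lam' j * s' j i) k]
      refine Finset.sum_congr rfl (fun i _ => ?_)
      rw [hω'eq i, ← Fin.sum_univ_eq_sum_range (fun j => lam' j * s' j ↑i) n]
      congr 1
      refine Finset.sum_congr rfl (fun j _ => ?_)
      rw [hlam'eq j, hs'eq j i]
    -- bridge LHS
    have hL : ∑ i ∈ range ℓ, ω' i * lam' i + ∑ i ∈ Ico ℓ k, ω' i * lam' (i + n - k)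
        = ∑ i : Fin k, ω i * (if (i : ℕ) < ℓ then lam (Fin.castLE hkn i)
            else lam ⟨(i : ℕ) + n - k, by have := i.isLt; omega⟩) := by
      have split : ∑ i : Fin k, ω i * (if (i : ℕ) < ℓ then lam (Fin.castLE hkn i)
            else lam ⟨(i : ℕ) + n - k, by have := i.isLt; omega⟩)
          = ∑ i ∈ range k, ω' i * (if i < ℓ then lam' i else lam' (i + n - k)) := by
        rw [← Fin.sum_univ_eq_sum_range
          (fun i => ω' i * (if i < ℓ then lam' i else lam' (i + n - k))) k]
        refine Finset.sum_congr rfl (fun i _ => ?_)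
        rw [hω'eq i]
        congr 1
        by_cases hi : (i : ℕ) < ℓ
        · simp only [if_pos hi, hlam'def]
          rw [dif_pos (lt_of_lt_of_le (lt_of_lt_of_le hi hℓ) hkn)]
          rfl
        · simp only [if_neg hi, hlam'def]
          have hin : (i : ℕ) + n - k < n := by have := i.isLt; omega
          rw [dif_pos hin]
      rw [split, Finset.range_eq_Ico k, ← Finset.sum_Ico_consecutive _ (Nat.zero_le ℓ) hℓ,
        ← Finset.range_eq_Ico]
      congr 1
      · refine Finset.sum_congr rfl (fun i hi => ?_)
        rw [if_pos (mem_range.mp hi)]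
      · refine Finset.sum_congr rfl (fun i hi => ?_)
        rw [if_neg (by have := (Finset.mem_Ico.mp hi).1; omega)]
    rw [hR, hL] at key
    exact key
  · intro i j hij hjn
    simp only [hlam'def]
    rw [dif_pos (lt_of_le_of_lt hij hjn), dif_pos hjn]
    exact hlam (by simp [Fin.mk_le_mk, hij])
  · intro i j hij hjk
    simp only [hω'def]
    rw [dif_pos (lt_of_le_of_lt hij hjk), dif_pos hjk]
    exact hω (by simp [Fin.mk_le_mk, hij])
  · intro i hi
    simp only [hω'def]
    rw [dif_pos (lt_of_lt_of_le hi hℓ)]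
    exact hωpos _ hi
  · intro i hi hik
    simp only [hω'def]
    rw [dif_pos hik]
    exact hωneg _ hi
  · intro j i
    simp only [hs'def]
    by_cases h : j < n ∧ i < k
    · rw [dif_pos h]; exact hs0 _ _
    · rw [dif_neg h]
  · intro i hik
    rw [← Fin.sum_univ_eq_sum_range (fun j => s' j i) n]
    have : ∀ j : Fin n, s' ↑j i = s j ⟨i, hik⟩ := by
      intro j; simp only [hs'def]; rw [dif_pos ⟨j.isLt, hik⟩]
    rw [Finset.sum_congr rfl (fun j _ => this j)]
    exact hcol _
  · intro j hjn
    rw [← Fin.sum_univ_eq_sum_range (fun i => s' j i) k]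
    have : ∀ i : Fin k, s' j ↑i = s ⟨j, hjn⟩ i := by
      intro i; simp only [hs'def]; rw [dif_pos ⟨hjn, i.isLt⟩]
    rw [Finset.sum_congr rfl (fun i _ => this i)]
    exact hrow _

section MatAux
variable {n k : ℕ}



lemma colsum (Z : Matrix (Fin n) (Fin k) ℂ) (hZ : Zᴴ * Z = 1) (i : Fin k) :
    ∑ j : Fin n, Complex.normSq (Z j i) = 1 := by
  have h1 : (Zᴴ * Z) i i = 1 := by rw [hZ]; simp
  rw [Matrix.mul_apply] at h1
  have h2 : ∀ j, Zᴴ i j * Z j i = (Complex.normSq (Z j i) : ℂ) := by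
    intro j
    rw [Matrix.conjTranspose_apply, Complex.star_def, Complex.normSq_eq_conj_mul_self]
  rw [Finset.sum_congr rfl (fun j _ => h2 j)] at h1
  exact_mod_cast h1

lemma rowsum (Z : Matrix (Fin n) (Fin k) ℂ) (hZ : Zᴴ * Z = 1) (j : Fin n) :
    ∑ i : Fin k, Complex.normSq (Z j i) ≤ 1 := by
  set P := Z * Zᴴ with hP
  have hPP : P * P = P := by
    rw [hP, Matrix.mul_assoc, ← Matrix.mul_assoc Zᴴ Z Zᴴ, hZ, Matrix.one_mul]
  have hPH : Pᴴ = P := by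
    rw [hP, conjTranspose_mul, conjTranspose_conjTranspose]
  set x : ℝ := ∑ i : Fin k, Complex.normSq (Z j i) with hx
  have hPjj : P j j = (x : ℂ) := by
    rw [hP, Matrix.mul_apply, hx]
    push_cast
    refine Finset.sum_congr rfl (fun i _ => ?_)
    rw [Matrix.conjTranspose_apply, Complex.star_def, Complex.mul_conj]
  have hdiag : (x : ℂ) = ∑ l : Fin n, (Complex.normSq (P j l) : ℂ) := by
    rw [← hPjj]
    conv_lhs => rw [← hPP]
    rw [Matrix.mul_apply]
    refine Finset.sum_congr rfl (fun l _ => ?_)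
    have h3 : P l j = star (P j l) := by
      conv_lhs => rw [← hPH]
      rw [Matrix.conjTranspose_apply]
    rw [h3, Complex.star_def, Complex.mul_conj]
  have hreal : x = ∑ l : Fin n, Complex.normSq (P j l) := by
    exact_mod_cast hdiag
  have hge : Complex.normSq (P j j) ≤ ∑ l : Fin n, Complex.normSq (P j l) :=
    Finset.single_le_sum (fun l _ => Complex.normSq_nonneg _) (Finset.mem_univ j)
  rw [hPjj] at hge
  have hns : Complex.normSq ((x : ℂ)) = x ^ 2 := by
    rw [Complex.normSq_ofReal]; ring
  rw [hns, ← hreal] at hge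
  have hx0 : 0 ≤ x := Finset.sum_nonneg (fun i _ => Complex.normSq_nonneg _)
  nlinarith

lemma traceform (Z : Matrix (Fin n) (Fin k) ℂ) (lam : Fin n → ℝ) (ω : Fin k → ℝ) :
    Matrix.trace (Matrix.diagonal (fun i => (ω i : ℂ)) *
        (Zᴴ * Matrix.diagonal (fun j => (lam j : ℂ)) * Z))
      = ((∑ i : Fin k, ω i * ∑ j : Fin n, lam j * Complex.normSq (Z j i) : ℝ) : ℂ) := by
  have hentry : ∀ i : Fin k, (Zᴴ * Matrix.diagonal (fun j => (lam j : ℂ)) * Z) i i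
      = ((∑ j : Fin n, lam j * Complex.normSq (Z j i) : ℝ) : ℂ) := by
    intro i
    rw [Matrix.mul_assoc, Matrix.mul_apply]
    push_cast
    refine Finset.sum_congr rfl (fun j _ => ?_)
    rw [Matrix.mul_apply]
    rw [Finset.sum_eq_single j]
    · rw [Matrix.diagonal_apply_eq, Matrix.conjTranspose_apply, Complex.star_def]
      rw [show (starRingEnd ℂ) (Z j i) * ((lam j : ℂ) * Z j i)
          = (lam j : ℂ) * ((starRingEnd ℂ) (Z j i) * Z j i) by ring,
        Complex.normSq_eq_conj_mul_self]
    · intro b _ hb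
      rw [Matrix.diagonal_apply_ne' _ hb, zero_mul]
    · intro hj; exact absurd (Finset.mem_univ j) hj
  rw [Matrix.trace]
  push_cast
  refine Finset.sum_congr rfl (fun i _ => ?_)
  rw [Matrix.diag_apply, Matrix.diagonal_mul, hentry i]
  push_cast
  ring

end MatAux

theorem trace_min_posdef_B
    (n k ℓ : ℕ) (hk : 1 ≤ k) (hkn : k ≤ n) (hℓ : ℓ ≤ k)
    (A B : Matrix (Fin n) (Fin n) ℂ) (hA : A.IsHermitian) (hB : B.PosDef)
    (U : Matrix (Fin n) (Fin n) ℂ) (hU : IsUnit U)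
    (lam : Fin n → ℝ) (hlam : Monotone lam)
    (hUA : Uᴴ * A * U = Matrix.diagonal fun i => (lam i : ℂ))
    (hUB : Uᴴ * B * U = 1)
    (D : Matrix (Fin k) (Fin k) ℂ) (hD : D.IsHermitian)
    (Q : Matrix (Fin k) (Fin k) ℂ) (hQ : Qᴴ * Q = 1)
    (ω : Fin k → ℝ) (hω : Antitone ω)
    (hQD : Qᴴ * D * Q = Matrix.diagonal fun i => (ω i : ℂ))
    (hωpos : ∀ i : Fin k, (i : ℕ) < ℓ → 0 ≤ ω i)
    (hωneg : ∀ i : Fin k, ℓ ≤ (i : ℕ) → ω i ≤ 0) :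
    (∀ X : Matrix (Fin n) (Fin k) ℂ, Xᴴ * B * X = 1 →
        ∃ t : ℝ, Matrix.trace (D * (Xᴴ * A * X)) = (t : ℂ)) ∧
    IsLeast {t : ℝ | ∃ X : Matrix (Fin n) (Fin k) ℂ,
        Xᴴ * B * X = 1 ∧ Matrix.trace (D * (Xᴴ * A * X)) = (t : ℂ)}
      (∑ i : Fin k, ω i *
        (if (i : ℕ) < ℓ then lam (Fin.castLE hkn i)
         else lam ⟨(i : ℕ) + n - k, by have := i.isLt; omega⟩)) := by
  have hUdet : IsUnit U.det := (Matrix.isUnit_iff_isUnit_det U).mp hU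
  have hUinv : U⁻¹ * U = 1 := Matrix.nonsing_inv_mul U hUdet
  have hUinv' : U * U⁻¹ = 1 := Matrix.mul_nonsing_inv U hUdet
  have hQQ : Q * Qᴴ = 1 := mul_eq_one_comm.mp hQ
  have hDexp : D = Q * Matrix.diagonal (fun i => (ω i : ℂ)) * Qᴴ := by
    calc D = (Q * Qᴴ) * D * (Q * Qᴴ) := by rw [hQQ, Matrix.one_mul, Matrix.mul_one]
      _ = Q * (Qᴴ * D * Q) * Qᴴ := by simp only [Matrix.mul_assoc]
      _ = Q * Matrix.diagonal (fun i => (ω i : ℂ)) * Qᴴ := by rw [hQD]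
  -- master formula
  have master : ∀ X : Matrix (Fin n) (Fin k) ℂ, Xᴴ * B * X = 1 →
      ((U⁻¹ * X * Q)ᴴ * (U⁻¹ * X * Q) = 1 ∧
        Matrix.trace (D * (Xᴴ * A * X)) =
          ((∑ i : Fin k, ω i * ∑ j : Fin n,
              lam j * Complex.normSq ((U⁻¹ * X * Q) j i) : ℝ) : ℂ)) := by
    intro X hX
    obtain ⟨W, hWdef⟩ : ∃ W', W' = U⁻¹ * X := ⟨_, rfl⟩
    obtain ⟨Z, hZWQ⟩ : ∃ Z', Z' = W * Q := ⟨_, rfl⟩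
    have hZX : U⁻¹ * X * Q = Z := by rw [hZWQ, hWdef]
    rw [hZX]
    have hXW : X = U * W := by rw [hWdef, ← Matrix.mul_assoc, hUinv', Matrix.one_mul]
    have hWW : Wᴴ * W = 1 := by
      calc Wᴴ * W = Wᴴ * (Uᴴ * B * U) * W := by rw [hUB, Matrix.mul_one]
        _ = Xᴴ * B * X := by
            rw [hXW, Matrix.conjTranspose_mul]; simp only [Matrix.mul_assoc]
        _ = 1 := hX
    have hXAX : Xᴴ * A * X = Wᴴ * Matrix.diagonal (fun j => (lam j : ℂ)) * W := by
      calc Xᴴ * A * X = Wᴴ * (Uᴴ * A * U) * W := by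
            rw [hXW, Matrix.conjTranspose_mul]; simp only [Matrix.mul_assoc]
        _ = Wᴴ * Matrix.diagonal (fun j => (lam j : ℂ)) * W := by rw [hUA]
    have hZZ : Zᴴ * Z = 1 := by
      calc Zᴴ * Z = Qᴴ * ((Wᴴ * W) * Q) := by
            rw [hZWQ, Matrix.conjTranspose_mul]; simp only [Matrix.mul_assoc]
        _ = 1 := by rw [hWW, Matrix.one_mul, hQ]
    refine ⟨hZZ, ?_⟩
    have key : D * (Xᴴ * A * X)
        = Q * (Matrix.diagonal (fun i => (ω i : ℂ)) *
            (Zᴴ * Matrix.diagonal (fun j => (lam j : ℂ)) * Z)) * Qᴴ := by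
      rw [hDexp, hXAX, hZWQ, Matrix.conjTranspose_mul]
      simp only [Matrix.mul_assoc]
      rw [hQQ, Matrix.mul_one]
    rw [key, Matrix.trace_mul_cycle, ← Matrix.mul_assoc, hQ, Matrix.one_mul]
    exact traceform Z lam ω
  refine ⟨fun X hX => ⟨_, (master X hX).2⟩, ?_, ?_⟩
  · -- membership: explicit minimizer
    set σ : Fin k → Fin n := fun i =>
      if h : (i : ℕ) < ℓ then Fin.castLE hkn i
      else ⟨(i : ℕ) + n - k, by have := i.isLt; omega⟩ with hσdef
    have hσval : ∀ i : Fin k, (σ i : ℕ) = if (i : ℕ) < ℓ then (i : ℕ) else (i : ℕ) + n - k := by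
      intro i
      simp only [hσdef]
      by_cases h : (i : ℕ) < ℓ
      · rw [dif_pos h, if_pos h]; rfl
      · rw [dif_neg h, if_neg h]
    have hσinj : Function.Injective σ := by
      intro a b hab
      have h1 := hσval a
      have h2 := hσval b
      rw [hab] at h1
      have ha := a.isLt
      have hb := b.isLt
      have : (a : ℕ) = (b : ℕ) := by
        by_cases h3 : (a : ℕ) < ℓ <;> by_cases h4 : (b : ℕ) < ℓ <;>
          simp [h3, h4] at h1 h2 <;> omega
      exact Fin.ext this
    set Z₀ : Matrix (Fin n) (Fin k) ℂ :=
      Matrix.of (fun j i => if j = σ i then 1 else 0) with hZ₀def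
    have hZ₀app : ∀ j i, Z₀ j i = if j = σ i then 1 else 0 := fun j i => rfl
    have hZ₀Z₀ : Z₀ᴴ * Z₀ = 1 := by
      ext i i'
      rw [Matrix.mul_apply, Matrix.one_apply]
      have : ∀ j : Fin n, Z₀ᴴ i j * Z₀ j i'
          = if j = σ i then (if j = σ i' then 1 else 0) else 0 := by
        intro j
        rw [Matrix.conjTranspose_apply, hZ₀app, hZ₀app]
        by_cases h1 : j = σ i <;> by_cases h2 : j = σ i' <;> simp [h1, h2]
      rw [Finset.sum_congr rfl (fun j _ => this j), Finset.sum_ite_eq' Finset.univ (σ i)]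
      simp only [Finset.mem_univ, if_true]
      by_cases h : i = i'
      · subst h; simp
      · rw [if_neg (fun hc => h (hσinj hc)), if_neg h]
    set X₀ : Matrix (Fin n) (Fin k) ℂ := U * Z₀ * Qᴴ with hX₀def
    have hX₀B : X₀ᴴ * B * X₀ = 1 := by
      calc X₀ᴴ * B * X₀
          = Q * (Z₀ᴴ * ((Uᴴ * (B * (U * (Z₀ * Qᴴ)))))) := by
            rw [hX₀def]
            simp only [Matrix.conjTranspose_mul, Matrix.conjTranspose_conjTranspose,
              Matrix.mul_assoc]
        _ = Q * (Z₀ᴴ * ((Uᴴ * B * U) * (Z₀ * Qᴴ))) := by simp only [Matrix.mul_assoc]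
        _ = Q * (Z₀ᴴ * (Z₀ * Qᴴ)) := by rw [hUB, Matrix.one_mul]
        _ = Q * Qᴴ := by rw [← Matrix.mul_assoc Z₀ᴴ Z₀ Qᴴ, hZ₀Z₀, Matrix.one_mul]
        _ = 1 := hQQ
    have hZX₀ : U⁻¹ * X₀ * Q = Z₀ := by
      calc U⁻¹ * X₀ * Q = (U⁻¹ * U) * (Z₀ * (Qᴴ * Q)) := by
            rw [hX₀def]; simp only [Matrix.mul_assoc]
        _ = Z₀ := by rw [hUinv, hQ, Matrix.mul_one, Matrix.one_mul]
    obtain ⟨-, htr⟩ := master X₀ hX₀B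
    refine ⟨X₀, hX₀B, ?_⟩
    rw [htr]
    congr 1
    refine Finset.sum_congr rfl (fun i _ => ?_)
    congr 1
    have hinner : ∀ j : Fin n, lam j * Complex.normSq ((U⁻¹ * X₀ * Q) j i)
        = if j = σ i then lam j else 0 := by
      intro j
      rw [hZX₀, hZ₀app]
      by_cases h : j = σ i <;> simp [h]
    rw [Finset.sum_congr rfl (fun j _ => hinner j),
      Finset.sum_ite_eq' Finset.univ (σ i) (fun j => lam j)]
    simp only [Finset.mem_univ, if_true]
    simp only [hσdef]
    by_cases h : (i : ℕ) < ℓ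
    · rw [dif_pos h, if_pos h]
    · rw [dif_neg h, if_neg h]
  · -- lower bound
    rintro t ⟨X, hX, htr⟩
    obtain ⟨hZZ, htr'⟩ := master X hX
    have ht : t = ∑ i : Fin k, ω i * ∑ j : Fin n,
        lam j * Complex.normSq ((U⁻¹ * X * Q) j i) := by
      apply Complex.ofReal_inj.mp
      rw [← htr, htr']
    rw [ht]
    exact core_ineq_fin n k ℓ hk hkn hℓ lam hlam ω hω hωpos hωneg
      (fun j i => Complex.normSq ((U⁻¹ * X * Q) j i)) (fun j i => Complex.normSq_nonneg _)
      (fun i => colsum _ hZZ i) (fun j => rowsum _ hZZ j)
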